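/- For every natural number m and real x, y, t with 1 + x t + y t² > 0, the m-th derivative with respect to t of (1 + x t + y t²)^{-1/2} equals m! · P_m( (x + 2 y t)/(1 + x t + y t²), y/(1 + x t + y t²) ) / √(1 + x t + y t²). -/

import Mathlib

open Real Finset

noncomputable def legendre2 (n : ℕ) (x y : ℝ) : ℝ :=
  ((-1 : ℝ) ^ n / Real.sqrt Real.pi) *
    ∑ r ∈ Finset.range (n / 2 + 1),
      Real.Gamma ((n : ℝ) - r + 1 / 2) * x ^ (n - 2 * r) * (-y) ^ r /
        ((Nat.factorial (n - 2 * r) : ℝ) * (Nat.factorial r : ℝ))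

noncomputable def cc (m r : ℕ) : ℝ :=
  if 2 * r ≤ m then
    (-1 : ℝ) ^ (m - r) * (Nat.factorial m : ℝ) * Real.Gamma ((m : ℝ) - r + 1 / 2) /
      (Real.sqrt Real.pi * (Nat.factorial (m - 2 * r) : ℝ) * (Nat.factorial r : ℝ))
  else 0

lemma key (m j : ℕ) (P : ℝ) :
    cc (m + 1) j * P ^ (m + 1 - 2 * j) =
      (if j ≤ m then cc m j * (-(1/2) - ((m : ℝ) - (j : ℕ))) * P ^ (m - 2 * j + 1) else 0) +
      (if j = 0 then 0
        else cc m (j - 1) * ((m - 2 * (j - 1) : ℕ) : ℝ) * 2 * P ^ (m - 2 * (j - 1) - 1)) := by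
  have hfac : ∀ n : ℕ, ((Nat.factorial n : ℕ) : ℝ) ≠ 0 :=
    fun n => Nat.cast_ne_zero.mpr (Nat.factorial_ne_zero _)
  have hsp : Real.sqrt Real.pi ≠ 0 := by positivity
  rcases j with _ | l
  · -- j = 0
    simp only [if_pos (Nat.zero_le m), if_pos rfl, ↓reduceIte, Nat.mul_zero, Nat.sub_zero, add_zero,
      Nat.cast_zero, sub_zero]
    simp only [cc, if_pos (by omega : 2*0 ≤ m+1), if_pos (by omega : 2*0 ≤ m), Nat.mul_zero,
      Nat.sub_zero, Nat.cast_zero, sub_zero]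
    have hne : ((m : ℝ) + 1/2) ≠ 0 := by positivity
    have hG : Real.Gamma (((m+1 : ℕ) : ℝ) + 1/2) = ((m : ℝ) + 1/2) * Real.Gamma ((m : ℝ) + 1/2) := by
      rw [show (((m+1 : ℕ)) : ℝ) + 1/2 = (m : ℝ) + 1/2 + 1 by push_cast; ring]
      exact Real.Gamma_add_one hne
    rw [hG, pow_succ]
    field_simp
    ring
  · by_cases h1 : 2 * (l + 1) ≤ m
    · obtain ⟨k, rfl⟩ : ∃ k, m = 2*l+2+k := ⟨m - (2*l+2), by omega⟩
      rw [if_pos (by omega : l+1 ≤ 2*l+2+k), if_neg (by omega : ¬ (l+1 = 0))]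
      simp only [cc, if_pos (by omega : 2*(l+1) ≤ 2*l+2+k+1), if_pos (by omega : 2*(l+1) ≤ 2*l+2+k),
        if_pos (by omega : 2*(l+1-1) ≤ 2*l+2+k)]
      rw [show 2*l+2+k+1 - 2*(l+1) = k+1 by omega, show 2*l+2+k - 2*(l+1) = k by omega,
        show l+1-1 = l by omega, show 2*l+2+k - 2*l = k+2 by omega,
        show k+2-1 = k+1 by omega,
        show 2*l+2+k+1 - (l+1) = l+k+2 by omega, show 2*l+2+k - (l+1) = l+k+1 by omega,
        show 2*l+2+k - l = l+k+2 by omega]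
      have hne : ((l : ℝ) + k + 1 + 1/2) ≠ 0 := by positivity
      have hG1 : Real.Gamma (((2*l+2+k+1 : ℕ) : ℝ) - ((l+1 : ℕ) : ℝ) + 1/2)
          = ((l : ℝ) + k + 1 + 1/2) * Real.Gamma ((l : ℝ) + k + 1 + 1/2) := by
        rw [show ((2*l+2+k+1 : ℕ) : ℝ) - ((l+1 : ℕ) : ℝ) + 1/2 = (l : ℝ) + k + 1 + 1/2 + 1 by
          push_cast; ring]
        exact Real.Gamma_add_one hne
      have hG2 : Real.Gamma (((2*l+2+k : ℕ) : ℝ) - ((l+1 : ℕ) : ℝ) + 1/2)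
          = Real.Gamma ((l : ℝ) + k + 1 + 1/2) := by
        norm_num; ring_nf
      have hG3 : Real.Gamma (((2*l+2+k : ℕ) : ℝ) - ((l : ℕ) : ℝ) + 1/2)
          = ((l : ℝ) + k + 1 + 1/2) * Real.Gamma ((l : ℝ) + k + 1 + 1/2) := by
        rw [show ((2*l+2+k : ℕ) : ℝ) - ((l : ℕ) : ℝ) + 1/2 = (l : ℝ) + k + 1 + 1/2 + 1 by
          push_cast; ring]
        exact Real.Gamma_add_one hne
      rw [hG1, hG2, hG3]
      rw [show Nat.factorial (k+2) = (k+2) * Nat.factorial (k+1) from rfl,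
        show Nat.factorial (k+1) = (k+1) * Nat.factorial k from rfl,
        show Nat.factorial (l+1) = (l+1) * Nat.factorial l from rfl,
        show Nat.factorial (2*l+2+k+1) = (2*l+2+k+1) * Nat.factorial (2*l+2+k) from rfl]
      push_cast
      rw [pow_succ, pow_add, pow_add]
      field_simp
      ring
    · by_cases h2 : 2 * (l + 1) ≤ m + 1
      · -- m = 2l+1
        obtain rfl : m = 2*l+1 := by omega
        rw [if_pos (by omega : l+1 ≤ 2*l+1), if_neg (by omega : ¬ (l+1 = 0))]
        simp only [cc, if_pos (by omega : 2*(l+1) ≤ 2*l+1+1), if_neg (by omega : ¬ 2*(l+1) ≤ 2*l+1),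
          if_pos (by omega : 2*(l+1-1) ≤ 2*l+1)]
        rw [show l+1-1 = l by omega, show 2*l+1+1 - 2*(l+1) = 0 by omega,
          show 2*l+1 - 2*l = 1 by omega, show (1:ℕ) - 1 = 0 by omega,
          show 2*l+1+1 - (l+1) = l+1 by omega, show 2*l+1 - l = l+1 by omega]
        have hG : Real.Gamma (((2*l+1+1 : ℕ) : ℝ) - ((l+1 : ℕ) : ℝ) + 1/2)
            = Real.Gamma (((2*l+1 : ℕ) : ℝ) - ((l : ℕ) : ℝ) + 1/2) := by
          push_cast; ring_nf
        rw [hG]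
        rw [show Nat.factorial (2*l+1+1) = (2*l+1+1) * Nat.factorial (2*l+1) from rfl,
          show Nat.factorial (l+1) = (l+1) * Nat.factorial l from rfl]
        push_cast
        field_simp
        ring
      · -- 2(l+1) > m+1 : all zero
        rw [if_neg (by omega : ¬ (l+1 = 0))]
        have hz1 : cc (m+1) (l+1) = 0 := if_neg (by omega)
        have hz2 : cc m (l+1) = 0 := if_neg (by omega)
        have hz3 : ((m - 2 * (l+1-1) : ℕ) : ℝ) = 0 := by
          rw [Nat.sub_eq_zero_of_le (by omega)]; norm_num
        rw [hz1, hz3]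
        split_ifs with h
        · rw [hz2]; ring
        · ring

lemma sum_ite_le (n : ℕ) (f : ℕ → ℝ) :
    (∑ j ∈ range (n + 1 + 1), (if j ≤ n then f j else 0)) = ∑ j ∈ range (n + 1), f j := by
  rw [Finset.sum_range_succ, if_neg (by omega), add_zero]
  exact Finset.sum_congr rfl fun j hj => if_pos (by simpa [Nat.lt_succ_iff] using hj)

lemma sum_ite_shift (n : ℕ) (g : ℕ → ℝ) :
    (∑ j ∈ range (n + 1 + 1), (if j = 0 then 0 else g (j - 1))) = ∑ j ∈ range (n + 1), g j := by
  rw [Finset.sum_range_succ']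
  simp

lemma main_formula (x y : ℝ) (m : ℕ) : ∀ t : ℝ, 0 < 1 + x * t + y * t ^ 2 →
    iteratedDeriv m (fun s : ℝ => (1 + x * s + y * s ^ 2) ^ (-(1 / 2) : ℝ)) t =
      ∑ r ∈ range (m + 1), cc m r * y ^ r *
        ((x + 2 * y * t) ^ (m - 2 * r) *
          (1 + x * t + y * t ^ 2) ^ (-(1/2) - ((m : ℝ) - (r : ℕ)))) := by
  induction m with
  | zero =>
    intro t ht
    rw [iteratedDeriv_zero]
    have h00 : cc 0 0 = 1 := by
      simp [cc]
      rw [show (2⁻¹ : ℝ) = 1/2 by norm_num, Real.Gamma_one_half_eq]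
      have hsp : Real.sqrt Real.pi ≠ 0 := by positivity
      field_simp
    simp [h00]
  | succ m ih =>
    intro t ht
    rw [iteratedDeriv_succ]
    have hopen : IsOpen {s : ℝ | 0 < 1 + x * s + y * s ^ 2} :=
      isOpen_lt continuous_const (by continuity)
    have hev : (iteratedDeriv m (fun s : ℝ => (1 + x * s + y * s ^ 2) ^ (-(1 / 2) : ℝ)))
        =ᶠ[nhds t] (fun u => ∑ r ∈ range (m + 1), cc m r * y ^ r *
          ((x + 2 * y * u) ^ (m - 2 * r) *
            (1 + x * u + y * u ^ 2) ^ (-(1/2) - ((m : ℝ) - (r : ℕ))))) := by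
      filter_upwards [hopen.mem_nhds ht] with s hs using ih s hs
    rw [hev.deriv_eq]
    have hQ : HasDerivAt (fun s : ℝ => 1 + x * s + y * s ^ 2) (x + 2 * y * t) t := by
      have : HasDerivAt (fun s : ℝ => 1 + x * s + y * s ^ 2)
          (0 + (x * 1) + (y * (2 * t ^ 1))) t :=
        (((hasDerivAt_const t (1:ℝ)).add ((hasDerivAt_id t).const_mul x)).add
          ((hasDerivAt_pow 2 t).const_mul y))
      convert this using 1
      simp; ring
    have hP : HasDerivAt (fun s : ℝ => x + 2 * y * s) (2 * y) t := by
      exact (((hasDerivAt_id' t).const_mul (2*y)).const_add x).congr_deriv (by ring)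
    have hD : ∀ r ∈ range (m + 1), HasDerivAt
        (fun u : ℝ => cc m r * y ^ r * ((x + 2 * y * u) ^ (m - 2 * r) *
            (1 + x * u + y * u ^ 2) ^ (-(1/2) - ((m : ℝ) - (r : ℕ)))))
        (cc m r * y ^ r *
          ((((m - 2 * r : ℕ) : ℝ) * (x + 2 * y * t) ^ (m - 2 * r - 1) * (2 * y)) *
              (1 + x * t + y * t ^ 2) ^ (-(1/2) - ((m : ℝ) - (r : ℕ)))
            + (x + 2 * y * t) ^ (m - 2 * r) *
              ((x + 2 * y * t) * (-(1/2) - ((m : ℝ) - (r : ℕ))) *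
                (1 + x * t + y * t ^ 2) ^ ((-(1/2) - ((m : ℝ) - (r : ℕ))) - 1)))) t := by
      intro r _
      exact ((hP.pow _).mul (hQ.rpow_const (Or.inl ht.ne'))).const_mul _
    rw [(HasDerivAt.fun_sum hD).deriv]
    have expand : ∀ j ∈ range (m + 1 + 1),
        cc (m + 1) j * y ^ j * ((x + 2 * y * t) ^ (m + 1 - 2 * j) *
          (1 + x * t + y * t ^ 2) ^ (-(1/2) - (((m + 1 : ℕ) : ℝ) - (j : ℕ)))) =
        (if j ≤ m then cc m j * (-(1/2) - ((m : ℝ) - (j : ℕ))) * (x + 2 * y * t) ^ (m - 2 * j + 1) *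
            (y ^ j * (1 + x * t + y * t ^ 2) ^ (-(1/2) - (((m + 1 : ℕ) : ℝ) - (j : ℕ)))) else 0)
        + (if j = 0 then 0 else
            cc m (j - 1) * ((m - 2 * (j - 1) : ℕ) : ℝ) * 2 *
              (x + 2 * y * t) ^ (m - 2 * (j - 1) - 1) *
            (y * y ^ (j - 1) *
              (1 + x * t + y * t ^ 2) ^ (-(1/2) - ((m : ℝ) - ((j - 1 : ℕ) : ℝ))))) := by
      intro j _
      have h := congrArg (fun z : ℝ => z *
        (y ^ j * (1 + x * t + y * t ^ 2) ^ (-(1/2) - (((m + 1 : ℕ) : ℝ) - (j : ℕ)))))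
        (key m j (x + 2 * y * t))
      simp only [add_mul, ite_mul, zero_mul] at h
      rw [show cc (m + 1) j * y ^ j * ((x + 2 * y * t) ^ (m + 1 - 2 * j) *
            (1 + x * t + y * t ^ 2) ^ (-(1/2) - (((m + 1 : ℕ) : ℝ) - (j : ℕ)))) =
          (cc (m + 1) j * (x + 2 * y * t) ^ (m + 1 - 2 * j)) *
            (y ^ j * (1 + x * t + y * t ^ 2) ^ (-(1/2) - (((m + 1 : ℕ) : ℝ) - (j : ℕ)))) by ring,
        h]
      congr 1
      split_ifs with h0
      · rfl
      · obtain ⟨i, rfl⟩ : ∃ i, j = i + 1 := ⟨j - 1, by omega⟩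
        simp only [Nat.add_sub_cancel]
        rw [show (-(1/2 : ℝ) - (((m + 1 : ℕ) : ℝ) - ((i + 1 : ℕ) : ℝ)))
            = -(1/2) - ((m : ℝ) - (i : ℕ)) by push_cast; ring]
        ring
    rw [Finset.sum_congr rfl expand, Finset.sum_add_distrib, sum_ite_le,
      sum_ite_shift m (fun i => cc m i * ((m - 2 * i : ℕ) : ℝ) * 2 *
        (x + 2 * y * t) ^ (m - 2 * i - 1) *
        (y * y ^ i * (1 + x * t + y * t ^ 2) ^ (-(1/2) - ((m : ℝ) - (i : ℕ))))),
      ← Finset.sum_add_distrib]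
    refine Finset.sum_congr rfl fun r hr => ?_
    rw [show (-(1/2 : ℝ) - (((m + 1 : ℕ) : ℝ) - (r : ℕ)))
        = (-(1/2) - ((m : ℝ) - (r : ℕ))) - 1 by push_cast; ring]
    ring
theorem legendre2_rodriguez (m : ℕ) (x y t : ℝ) (h : 0 < 1 + x * t + y * t ^ 2) :
    iteratedDeriv m (fun s : ℝ => (1 + x * s + y * s ^ 2) ^ (-(1 / 2) : ℝ)) t =
      (Nat.factorial m : ℝ) *
        legendre2 m ((x + 2 * y * t) / (1 + x * t + y * t ^ 2))
          (y / (1 + x * t + y * t ^ 2)) /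
        Real.sqrt (1 + x * t + y * t ^ 2) := by
  rw [main_formula x y m t h]
  have htrim : ∑ r ∈ range (m + 1), cc m r * y ^ r *
        ((x + 2 * y * t) ^ (m - 2 * r) *
          (1 + x * t + y * t ^ 2) ^ (-(1/2) - ((m : ℝ) - (r : ℕ)))) =
      ∑ r ∈ range (m / 2 + 1), cc m r * y ^ r *
        ((x + 2 * y * t) ^ (m - 2 * r) *
          (1 + x * t + y * t ^ 2) ^ (-(1/2) - ((m : ℝ) - (r : ℕ)))) := by
    refine (Finset.sum_subset (Finset.range_subset_range.mpr (by omega)) ?_).symm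
    intro r _ hr2
    have : ¬ 2 * r ≤ m := by
      simp only [Finset.mem_range] at hr2; omega
    rw [cc, if_neg this]; ring
  rw [htrim, legendre2, Finset.mul_sum, Finset.mul_sum, Finset.sum_div]
  refine Finset.sum_congr rfl fun r hr => ?_
  have h2r : 2 * r ≤ m := by
    simp only [Finset.mem_range] at hr; omega
  have hrm : r ≤ m := by omega
  have hQne : (1 + x * t + y * t ^ 2) ≠ 0 := ne_of_gt h
  have hsq : Real.sqrt (1 + x * t + y * t ^ 2) ≠ 0 := by positivity
  have hsp : Real.sqrt Real.pi ≠ 0 := by positivity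
  have hf1 : ((Nat.factorial (m - 2 * r) : ℕ) : ℝ) ≠ 0 :=
    Nat.cast_ne_zero.mpr (Nat.factorial_ne_zero _)
  have hf2 : ((Nat.factorial r : ℕ) : ℝ) ≠ 0 := Nat.cast_ne_zero.mpr (Nat.factorial_ne_zero _)
  have hex : (-(1/2 : ℝ) - ((m : ℝ) - (r : ℕ))) = -(1/2 : ℝ) + -((m - r : ℕ) : ℝ) := by
    rw [Nat.cast_sub hrm]; push_cast; ring
  rw [hex, Real.rpow_add h, Real.rpow_neg h.le, ← Real.sqrt_eq_rpow, Real.rpow_neg h.le,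
    Real.rpow_natCast]
  rw [cc, if_pos h2r]
  have h1 : ((-1 : ℝ)) ^ r * (-1) ^ r = 1 := by
    rw [← pow_add, ← two_mul, pow_mul]; norm_num
  have hsgn : ((-1 : ℝ)) ^ (m - r) = (-1) ^ m * (-1) ^ r := by
    calc ((-1 : ℝ)) ^ (m - r) = (-1) ^ (m - r) * ((-1) ^ r * (-1) ^ r) := by rw [h1, mul_one]
      _ = ((-1) ^ (m - r) * (-1) ^ r) * (-1) ^ r := by ring
      _ = (-1) ^ m * (-1) ^ r := by rw [← pow_add, Nat.sub_add_cancel hrm]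
  rw [hsgn, div_pow, neg_pow (y / (1 + x * t + y * t ^ 2)) r, div_pow,
    show m - r = (m - 2 * r) + r by omega, pow_add]
  field_simp
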